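/- Let n>0 and a∈A. If φ∈D̂ₙ is XP⁻-consistent, then there are ψ₁,…,ψ_k∈N̂ₙ such that XP⁻⊢a∧φ≡⋁_{1≤i≤k}ψᵢ. -/

import Mathlib

attribute [local instance] Classical.propDecidable

mutual
/-- Path expressions of `XPath↓⁻` (no inequality tests in the language). -/
inductive PathExpr (A : Type) : Type
  | eps : PathExpr A
  | down : PathExpr A
  | test : NodeExpr A → PathExpr A
  | comp : PathExpr A → PathExpr A → PathExpr A
  | union : PathExpr A → PathExpr A → PathExpr A

/-- Node expressions of `XPath↓⁻` (no inequality tests in the language). -/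
inductive NodeExpr (A : Type) : Type
  | lab : A → NodeExpr A
  | neg : NodeExpr A → NodeExpr A
  | conj : NodeExpr A → NodeExpr A → NodeExpr A
  | diam : PathExpr A → NodeExpr A
  | eqTest : PathExpr A → PathExpr A → NodeExpr A
end

namespace XPathMinus

variable {A : Type}

/-- Defined disjunction `φ ∨ ψ := ¬(¬φ ∧ ¬ψ)`. -/
def nOr (φ ψ : NodeExpr A) : NodeExpr A := .neg (.conj (.neg φ) (.neg ψ))

/-- `⊤ := ⟨ε⟩`. -/
def topN : NodeExpr A := .diam .eps

/-- `⊥ := ¬⊤`. -/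
def botN : NodeExpr A := .neg topN

/-- `⊥̄ := [¬⟨ε⟩]`. -/
def botP : PathExpr A := .test (.neg (.diam .eps))

def bigOr (l : List (NodeExpr A)) : NodeExpr A := l.foldr nOr botN

def bigUnion (l : List (PathExpr A)) : PathExpr A := l.foldr PathExpr.union botP

/-- A data tree: a tree (connected, acyclic, unique parents except the root)
whose nodes carry labels from `A`, together with a partition of the nodes
(presented as an equivalence relation `eqd`). -/
structure DataTree (A : Type) where
  X : Type
  child : X → X → Prop
  root : X
  label : X → A
  eqd : X → X → Prop
  eqd_equiv : Equivalence eqd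
  parent_unique : ∀ ⦃x y z : X⦄, child x z → child y z → x = y
  root_no_parent : ∀ x : X, ¬ child x root
  reach : ∀ x : X, Relation.ReflTransGen child root x
  acyclic : ∀ x : X, ¬ Relation.TransGen child x x

mutual
/-- Semantics of path expressions. -/
def psem (T : DataTree A) : PathExpr A → T.X → T.X → Prop
  | .eps, x, y => x = y
  | .down, x, y => T.child x y
  | .test φ, x, y => x = y ∧ nsem T φ x
  | .comp α β, x, z => ∃ y, psem T α x y ∧ psem T β y z
  | .union α β, x, y => psem T α x y ∨ psem T β x y

/-- Semantics of node expressions. -/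
def nsem (T : DataTree A) : NodeExpr A → T.X → Prop
  | .lab a, x => T.label x = a
  | .neg φ, x => ¬ nsem T φ x
  | .conj φ ψ, x => nsem T φ x ∧ nsem T ψ x
  | .diam α, x => ∃ y, psem T α x y
  | .eqTest α β, x => ∃ y z, psem T α x y ∧ psem T β x z ∧ T.eqd y z
end

/-- Semantic equivalence of node expressions: same denotation in every data tree. -/
def nodeValid (φ ψ : NodeExpr A) : Prop :=
  ∀ (T : DataTree A) (x : T.X), nsem T φ x ↔ nsem T ψ x

/-- Semantic equivalence of path expressions: same denotation in every data tree. -/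
def pathValid (α β : PathExpr A) : Prop :=
  ∀ (T : DataTree A) (x y : T.X), psem T α x y ↔ psem T β x y

mutual
/-- Derivability of node equivalences in the axiomatic system `XP⁻`. -/
inductive NDer {A : Type} [Fintype A] : NodeExpr A → NodeExpr A → Prop
  | refl (φ : NodeExpr A) : NDer φ φ
  | symm {φ ψ : NodeExpr A} : NDer φ ψ → NDer ψ φ
  | trans {φ ψ ρ : NodeExpr A} : NDer φ ψ → NDer ψ ρ → NDer φ ρ
  | congr_neg {φ ψ : NodeExpr A} : NDer φ ψ → NDer (.neg φ) (.neg ψ)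
  | congr_conj {φ φ' ψ ψ' : NodeExpr A} :
      NDer φ φ' → NDer ψ ψ' → NDer (.conj φ ψ) (.conj φ' ψ')
  | congr_diam {α β : PathExpr A} : PDer α β → NDer (.diam α) (.diam β)
  | congr_eqTest {α α' β β' : PathExpr A} :
      PDer α α' → PDer β β' → NDer (.eqTest α β) (.eqTest α' β')
  | lbAx1 : NDer topN (bigOr ((Finset.univ : Finset A).toList.map NodeExpr.lab))
  | lbAx2 {a b : A} : a ≠ b → NDer botN (.conj (.lab a) (.lab b))
  | ndAx1 (φ ψ : NodeExpr A) :
      NDer φ (nOr (.neg (nOr (.neg φ) ψ)) (.neg (nOr (.neg φ) (.neg ψ))))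
  | ndAx2 (φ : NodeExpr A) : NDer (.diam (.test φ)) φ
  | ndAx3 (α β : PathExpr A) : NDer (.diam (.union α β)) (nOr (.diam α) (.diam β))
  | ndAx4 (α β : PathExpr A) : NDer (.diam (.comp α β)) (.diam (.comp α (.test (.diam β))))
  | eqAx1 (α β : PathExpr A) : NDer (.eqTest α β) (.eqTest β α)
  | eqAx2 (α β γ : PathExpr A) :
      NDer (.eqTest (.union α β) γ) (nOr (.eqTest α γ) (.eqTest β γ))
  | eqAx3 (φ : NodeExpr A) (α β : PathExpr A) :
      NDer (.conj φ (.eqTest α β)) (.eqTest (.comp (.test φ) α) β)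
  | eqAx4 (α β : PathExpr A) : NDer (nOr (.eqTest α β) (.diam α)) (.diam α)
  | eqAx5 (γ α β : PathExpr A) :
      NDer (nOr (.diam (.comp γ (.test (.eqTest α β)))) (.eqTest (.comp γ α) (.comp γ β)))
        (.eqTest (.comp γ α) (.comp γ β))
  | eqAx6 (α : PathExpr A) : NDer (.eqTest α α) (.diam α)
  | eqAx7 (α β : PathExpr A) :
      NDer (nOr (.conj (.eqTest α .eps) (.eqTest β .eps)) (.eqTest α β)) (.eqTest α β)
  | eqAx8 (α β γ : PathExpr A) :
      NDer (nOr (.eqTest α (.comp β (.test (.eqTest .eps γ)))) (.eqTest α (.comp β γ)))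
        (.eqTest α (.comp β γ))

/-- Derivability of path equivalences in the axiomatic system `XP⁻`. -/
inductive PDer {A : Type} [Fintype A] : PathExpr A → PathExpr A → Prop
  | refl (α : PathExpr A) : PDer α α
  | symm {α β : PathExpr A} : PDer α β → PDer β α
  | trans {α β γ : PathExpr A} : PDer α β → PDer β γ → PDer α γ
  | congr_test {φ ψ : NodeExpr A} : NDer φ ψ → PDer (.test φ) (.test ψ)
  | congr_comp {α α' β β' : PathExpr A} :
      PDer α α' → PDer β β' → PDer (.comp α β) (.comp α' β')
  | congr_union {α α' β β' : PathExpr A} :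
      PDer α α' → PDer β β' → PDer (.union α β) (.union α' β')
  | prAx1 (α β : PathExpr A) : PDer (.comp (.comp α (.test (.neg (.diam β)))) β) botP
  | prAx2 : PDer (.test topN) (.eps : PathExpr A)
  | prAx3 (φ ψ : NodeExpr A) : PDer (.test (nOr φ ψ)) (.union (.test φ) (.test ψ))
  | isAx1 (α β γ : PathExpr A) : PDer (.union (.union α β) γ) (.union α (.union β γ))
  | isAx2 (α β : PathExpr A) : PDer (.union α β) (.union β α)
  | isAx3 (α : PathExpr A) : PDer (.union α α) α
  | isAx4 (α β γ : PathExpr A) : PDer (.comp α (.comp β γ)) (.comp (.comp α β) γ)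
  | isAx5l (α : PathExpr A) : PDer (.comp .eps α) α
  | isAx5r (α : PathExpr A) : PDer (.comp α .eps) α
  | isAx6l (α β γ : PathExpr A) :
      PDer (.comp α (.union β γ)) (.union (.comp α β) (.comp α γ))
  | isAx6r (α β γ : PathExpr A) :
      PDer (.comp (.union α β) γ) (.union (.comp α γ) (.comp β γ))
  | isAx7 (α : PathExpr A) : PDer (.union botP α) α
end

/-- A node expression is `XP⁻`-consistent if it is not provably equivalent to `⊥`. -/
def NConsistent [Fintype A] (φ : NodeExpr A) : Prop := ¬ NDer φ botN

/-- A path expression is `XP⁻`-consistent if it is not provably equivalent to `⊥̄`. -/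
def PConsistent [Fintype A] (α : PathExpr A) : Prop := ¬ PDer α botP

/-- The normal form `a ∧ ⋀_{d ∈ C} d ∧ ⋀_{d ∈ D∖C} ¬d`, built along the canonical listing `D`. -/
noncomputable def mkNF (a : A) (C D : List (NodeExpr A)) : NodeExpr A :=
  D.foldl (fun acc d => .conj acc (if d ∈ C then d else .neg d)) (.lab a)

/-- The canonical lists of normal-form path expressions (first component)
and normal-form node expressions (second component) at each level. -/
noncomputable def NF (A : Type) [Fintype A] : ℕ → List (PathExpr A) × List (NodeExpr A)
  | 0 =>
    ([.eps],
      (Finset.univ : Finset A).toList.map fun a =>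
        NodeExpr.conj (.lab a) (.eqTest .eps .eps))
  | n+1 =>
    let P := (NF A n).1
    let N := (NF A n).2
    let P' : List (PathExpr A) :=
      .eps :: N.flatMap fun ψ => P.map fun β => PathExpr.comp .down (.comp (.test ψ) β)
    let D : List (NodeExpr A) :=
      P'.flatMap fun α => P'.map fun β => NodeExpr.eqTest α β
    let cands : List (NodeExpr A) :=
      D.sublists.flatMap fun C => (Finset.univ : Finset A).toList.map fun a => mkNF a C D
    (P', cands.filter fun φ => decide (NConsistent φ))

/-- `P̂ₙ`: normal-form path expressions of level `n`. -/
noncomputable def Pnf (A : Type) [Fintype A] (n : ℕ) : Set (PathExpr A) :=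
  {α | α ∈ (NF A n).1}

/-- `N̂ₙ`: normal-form node expressions of level `n`. -/
noncomputable def Nnf (A : Type) [Fintype A] (n : ℕ) : Set (NodeExpr A) :=
  {φ | φ ∈ (NF A n).2}

/-- `D̂ₙ`: data-aware diamonds between normal-form paths of level `n`. -/
noncomputable def Dnf (A : Type) [Fintype A] (n : ℕ) : Set (NodeExpr A) :=
  {φ | ∃ α ∈ Pnf A n, ∃ β ∈ Pnf A n, φ = NodeExpr.eqTest α β}

/-- The conjuncts of a node expression (flattening `∧`). -/
def conjuncts : NodeExpr A → List (NodeExpr A)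
  | .conj φ ψ => conjuncts φ ++ conjuncts ψ
  | φ => [φ]

/-- `δ` is a conjunct of `ψ`. -/
def IsConjunct (δ ψ : NodeExpr A) : Prop := δ ∈ conjuncts ψ

/-- Length of a path expression. -/
def plen : PathExpr A → ℕ
  | .eps => 0
  | .down => 1
  | .test _ => 0
  | .comp α β => plen α + plen β
  | .union α β => max (plen α) (plen β)

mutual
/-- Downward depth of a node expression. -/
def ndd : NodeExpr A → ℕ
  | .lab _ => 0
  | .neg φ => ndd φ
  | .conj φ ψ => max (ndd φ) (ndd ψ)
  | .diam α => pdd α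
  | .eqTest α β => max (pdd α) (pdd β)

/-- Downward depth of a path expression. -/
def pdd : PathExpr A → ℕ
  | .eps => 0
  | .down => 1
  | .test φ => ndd φ
  | .comp α β => max (max (pdd α) (pdd β)) (plen α + pdd β)
  | .union α β => max (pdd α) (pdd β)
end

/-- The path `↓[ψ]α`. -/
def dPath (ψ : NodeExpr A) (α : PathExpr A) : PathExpr A :=
  .comp .down (.comp (.test ψ) α)

/-- A path expression whose leftmost symbol is `↓`. -/
def startsWithDown : PathExpr A → Prop
  | .down => True
  | .comp α _ => startsWithDown α
  | _ => False

end XPathMinus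
namespace XPathMinus
variable {A : Type} [Fintype A]

/-! ### Basic disjunction toolkit -/

theorem orCongr {x x' y y' : NodeExpr A} (h1 : NDer x x') (h2 : NDer y y') :
    NDer (nOr x y) (nOr x' y') :=
  (NDer.congr_conj h1.congr_neg h2.congr_neg).congr_neg

theorem orDiam (x y : NodeExpr A) :
    NDer (nOr x y) (.diam (.union (.test x) (.test y))) :=
  (NDer.ndAx2 (nOr x y)).symm.trans (NDer.congr_diam (PDer.prAx3 x y))

theorem orComm (x y : NodeExpr A) : NDer (nOr x y) (nOr y x) :=
  (orDiam x y).trans ((NDer.congr_diam (PDer.isAx2 _ _)).trans (orDiam y x).symm)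

theorem orAssoc (x y z : NodeExpr A) : NDer (nOr (nOr x y) z) (nOr x (nOr y z)) :=
  (orDiam _ z).trans <|
    (NDer.congr_diam (PDer.congr_union (PDer.prAx3 x y) (.refl _))).trans <|
    (NDer.congr_diam (PDer.isAx1 _ _ _)).trans <|
    (NDer.congr_diam (PDer.congr_union (.refl _) (PDer.prAx3 y z).symm)).trans
    (orDiam x (nOr y z)).symm

theorem orIdem (x : NodeExpr A) : NDer (nOr x x) x :=
  (orDiam x x).trans ((NDer.congr_diam (PDer.isAx3 _)).trans (NDer.ndAx2 x))

theorem botOr (x : NodeExpr A) : NDer (nOr botN x) x :=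
  (orDiam _ x).trans ((NDer.congr_diam (PDer.isAx7 _)).trans (NDer.ndAx2 x))

theorem orBot (x : NodeExpr A) : NDer (nOr x botN) x := (orComm x botN).trans (botOr x)

/-! ### Huntington development -/

private theorem l1h (x : NodeExpr A) :
    NDer x (nOr (.neg (nOr (.neg x) x)) (.neg (.neg x))) :=
  (NDer.ndAx1 x x).trans (orCongr (.refl _) (NDer.congr_neg (orIdem (.neg x))))

theorem orDnSelf (x : NodeExpr A) : NDer (nOr x (.neg (.neg x))) x :=
  (orCongr (l1h x) (.refl _)).trans <| (orAssoc _ _ _).trans <|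
    (orCongr (.refl _) (orIdem _)).trans (l1h x).symm

theorem dn (x : NodeExpr A) : NDer (.neg (.neg x)) x := by
  have h15 : NDer (NodeExpr.neg (.neg x))
      (nOr (.neg (nOr x (.neg x)))
        (.neg (nOr (.neg (.neg (.neg x))) (.neg (nOr x (.neg x)))))) := by
    have h := NDer.ndAx1 (NodeExpr.neg (.neg x)) (nOr x (.neg x))
    have harr : NDer (nOr (NodeExpr.neg (.neg (.neg x))) (nOr x (.neg x))) (nOr x (.neg x)) :=
      (orComm _ _).trans <| (orAssoc _ _ _).trans <| orCongr (.refl x) (orDnSelf (.neg x))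
    exact h.trans (orCongr harr.congr_neg (.refl _))
  have l1' : NDer x (nOr (.neg (nOr x (.neg x))) (.neg (.neg x))) :=
    (l1h x).trans (orCongr (NDer.congr_neg (orComm (.neg x) x)) (.refl _))
  exact (l1'.trans <| (orCongr (.refl _) h15).trans <| (orAssoc _ _ _).symm.trans <|
    (orCongr (orIdem _) (.refl _)).trans h15.symm).symm

theorem sumBotLeft {p q : NodeExpr A} (h : NDer (nOr p q) botN) : NDer p botN :=
  (botOr p).symm.trans <| (orCongr h.symm (.refl p)).trans <| (orAssoc _ _ _).trans <|
    (orCongr (.refl p) (orComm q p)).trans <| (orAssoc p p q).symm.trans <|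
    (orCongr (orIdem p) (.refl q)).trans h

theorem negBotTop : NDer (NodeExpr.neg (botN : NodeExpr A)) topN := dn topN

theorem topOr (x : NodeExpr A) : NDer (nOr topN x) topN := by
  have h : NDer (botN : NodeExpr A)
      (nOr (.neg (nOr (.neg botN) x)) (.neg (nOr (.neg botN) (.neg x)))) := NDer.ndAx1 botN x
  have h' : NDer (botN : NodeExpr A)
      (nOr (.neg (nOr topN x)) (.neg (nOr topN (.neg x)))) :=
    h.trans (orCongr (NDer.congr_neg (orCongr negBotTop (.refl _)))
      (NDer.congr_neg (orCongr negBotTop (.refl _))))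
  have h1 : NDer (NodeExpr.neg (nOr topN x)) botN := sumBotLeft h'.symm
  exact (dn _).symm.trans (h1.congr_neg.trans negBotTop)

theorem orTop (x : NodeExpr A) : NDer (nOr x topN) topN := (orComm _ _).trans (topOr x)

theorem em (x : NodeExpr A) : NDer (nOr x (.neg x)) topN := by
  have h : NDer (topN : NodeExpr A)
      (nOr (.neg (nOr botN x)) (.neg (nOr botN (.neg x)))) := NDer.ndAx1 topN x
  have h' : NDer (topN : NodeExpr A) (nOr x (.neg x)) :=
    h.trans <| (orCongr (NDer.congr_neg (botOr x)) (NDer.congr_neg (botOr (.neg x)))).trans <|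
      (orCongr (.refl _) (dn x)).trans (orComm _ _)
  exact h'.symm

theorem orNeg (x y : NodeExpr A) :
    NDer (NodeExpr.neg (nOr (.neg x) (.neg y))) (.conj x y) :=
  (dn _).trans (NDer.congr_conj (dn x) (dn y))

theorem conjOr (x y : NodeExpr A) :
    NDer (NodeExpr.conj x y) (.neg (nOr (.neg x) (.neg y))) := (orNeg x y).symm

theorem negOr (x y : NodeExpr A) :
    NDer (NodeExpr.neg (nOr x y)) (.conj (.neg x) (.neg y)) := dn _

theorem negConj (x y : NodeExpr A) :
    NDer (NodeExpr.neg (.conj x y)) (nOr (.neg x) (.neg y)) :=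
  NDer.congr_neg (NDer.congr_conj (dn x).symm (dn y).symm)

theorem hstar (x y : NodeExpr A) :
    NDer x (nOr (.conj x y) (.conj x (.neg y))) :=
  ((NDer.ndAx1 x y).trans (orCongr
    ((NDer.congr_neg (orCongr (.refl _) (dn y).symm)).trans (orNeg x (.neg y)))
    (orNeg x y))).trans (orComm _ _)

theorem andComm (x y : NodeExpr A) : NDer (NodeExpr.conj x y) (.conj y x) :=
  (conjOr x y).trans ((orComm _ _).congr_neg.trans (orNeg y x))

theorem andAssoc (x y z : NodeExpr A) :
    NDer (NodeExpr.conj (.conj x y) z) (.conj x (.conj y z)) :=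
  (conjOr _ z).trans <|
    ((orCongr (negConj x y) (.refl _)).congr_neg).trans <|
    ((orAssoc _ _ _).congr_neg).trans <|
    ((orCongr (.refl _) (negConj y z).symm).congr_neg).trans (orNeg x (.conj y z))

theorem andTop (x : NodeExpr A) : NDer (NodeExpr.conj x topN) x :=
  (conjOr x topN).trans <| ((orComm _ _).congr_neg).trans <|
    ((botOr _).congr_neg).trans (dn x)

theorem topAnd (x : NodeExpr A) : NDer (NodeExpr.conj topN x) x :=
  (andComm _ _).trans (andTop x)

theorem andBot (x : NodeExpr A) : NDer (NodeExpr.conj x botN) botN :=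
  (conjOr x botN).trans <| ((orCongr (.refl _) negBotTop).congr_neg).trans
    ((orTop _).congr_neg)

theorem botAnd (x : NodeExpr A) : NDer (NodeExpr.conj botN x) botN :=
  (andComm _ _).trans (andBot x)

theorem andNotSelf (x : NodeExpr A) : NDer (NodeExpr.conj x (.neg x)) botN :=
  (conjOr x (.neg x)).trans <| ((orCongr (.refl _) (dn x)).congr_neg).trans <|
    ((orComm _ _).congr_neg).trans ((em x).congr_neg)

theorem notSelfAnd (x : NodeExpr A) : NDer (NodeExpr.conj (.neg x) x) botN :=
  (andComm _ _).trans (andNotSelf x)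

theorem andIdem (x : NodeExpr A) : NDer (NodeExpr.conj x x) x :=
  (conjOr x x).trans ((orIdem _).congr_neg.trans (dn x))

theorem absorbOr (x y : NodeExpr A) : NDer (nOr x (.conj x y)) x :=
  (orCongr (hstar x y) (.refl _)).trans <| (orAssoc _ _ _).trans <|
    (orCongr (.refl _) (orComm _ _)).trans <| (orAssoc _ _ _).symm.trans <|
    (orCongr (orIdem _) (.refl _)).trans (hstar x y).symm

theorem absorbAnd (x y : NodeExpr A) : NDer (NodeExpr.conj x (nOr x y)) x :=
  (conjOr x (nOr x y)).trans <|
    ((orCongr (.refl _) (negOr x y)).congr_neg).trans <|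
    ((absorbOr (.neg x) (.neg y)).congr_neg).trans (dn x)

theorem andLeftComm (x y z : NodeExpr A) :
    NDer (NodeExpr.conj x (.conj y z)) (.conj y (.conj x z)) :=
  (andAssoc x y z).symm.trans ((NDer.congr_conj (andComm x y) (.refl _)).trans (andAssoc y x z))

theorem negYAbsorb (y z : NodeExpr A) :
    NDer (NodeExpr.conj (.neg y) (nOr y z)) (.conj (.neg y) z) := by
  have hvz : NDer (NodeExpr.conj (.conj (.neg y) (nOr y z)) z) (.conj (.neg y) z) :=
    (andAssoc _ _ _).trans <| NDer.congr_conj (.refl _) <|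
      (andComm _ z).trans ((NDer.congr_conj (.refl z) (orComm y z)).trans (absorbAnd z y))
  have hvnz : NDer (NodeExpr.conj (.conj (.neg y) (nOr y z)) (.neg z)) botN :=
    (NDer.congr_conj (andComm _ _) (.refl _)).trans <| (andAssoc _ _ _).trans <|
      (NDer.congr_conj (.refl _) (negOr y z).symm).trans (andNotSelf (nOr y z))
  exact (hstar (NodeExpr.conj (.neg y) (nOr y z)) z).trans <|
    (orCongr hvz hvnz).trans (orBot _)

theorem distrib (x y z : NodeExpr A) :
    NDer (NodeExpr.conj x (nOr y z)) (nOr (.conj x y) (.conj x z)) := by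
  have huy : NDer (NodeExpr.conj (.conj x (nOr y z)) y) (.conj x y) :=
    (andAssoc _ _ _).trans <| NDer.congr_conj (.refl _) <|
      (andComm _ y).trans (absorbAnd y z)
  have huny : NDer (NodeExpr.conj (.conj x (nOr y z)) (.neg y)) (.conj x (.conj (.neg y) z)) :=
    (andAssoc _ _ _).trans <| NDer.congr_conj (.refl _) <|
      (andComm _ _).trans (negYAbsorb y z)
  have hrhs : NDer (nOr (NodeExpr.conj x y) (.conj x z))
      (nOr (.conj x y) (.conj x (.conj (.neg y) z))) :=
    (orCongr (.refl _) (hstar (NodeExpr.conj x z) y)).trans <|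
      (orAssoc _ _ _).symm.trans <|
      (orCongr ((orCongr (.refl _)
          ((andAssoc x z y).trans ((NDer.congr_conj (.refl x) (andComm z y)).trans (andAssoc x y z).symm))).trans
        (absorbOr (NodeExpr.conj x y) z))
        ((andAssoc x z (.neg y)).trans (NDer.congr_conj (.refl x) (andComm z (.neg y)))))
  exact ((hstar (NodeExpr.conj x (nOr y z)) y).trans (orCongr huy huny)).trans hrhs.symm

theorem distribR (x y z : NodeExpr A) :
    NDer (NodeExpr.conj (nOr x y) z) (nOr (.conj x z) (.conj y z)) :=
  (andComm _ _).trans ((distrib z x y).trans (orCongr (andComm z x) (andComm z y)))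

/-! ### Order -/

def nle (x y : NodeExpr A) : Prop := NDer (nOr x y) y

theorem leOfDer {x y : NodeExpr A} (h : NDer x y) : nle x y :=
  (orCongr h (.refl _)).trans (orIdem y)

theorem leRefl (x : NodeExpr A) : nle x x := orIdem x

theorem leTrans {x y z : NodeExpr A} (h1 : nle x y) (h2 : nle y z) : nle x z :=
  (orCongr (.refl x) h2.symm).trans <| (orAssoc _ _ _).symm.trans <|
    (orCongr h1 (.refl z)).trans h2

theorem leBot {x : NodeExpr A} (h : nle x botN) : NDer x botN := (orBot x).symm.trans h

theorem botLe (x : NodeExpr A) : nle botN x := botOr x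

theorem leOrLeft (x y : NodeExpr A) : nle x (nOr x y) :=
  (orAssoc x x y).symm.trans (orCongr (orIdem x) (.refl y))

theorem leOrRight (x y : NodeExpr A) : nle y (nOr x y) :=
  (orAssoc y x y).symm.trans ((orCongr (orComm y x) (.refl y)).trans
    ((orAssoc x y y).trans (orCongr (.refl x) (orIdem y))))

theorem orLe {x y z : NodeExpr A} (h1 : nle x z) (h2 : nle y z) : nle (nOr x y) z :=
  (orAssoc x y z).trans ((orCongr (.refl x) h2).trans h1)

theorem nleCongr {x x' y y' : NodeExpr A} (hx : NDer x x') (hy : NDer y y')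
    (h : nle x y) : nle x' y' :=
  (orCongr hx.symm hy.symm).trans (h.trans hy)

theorem andLeLeft (x y : NodeExpr A) : nle (NodeExpr.conj x y) x :=
  (orComm _ x).trans (absorbOr x y)

theorem andLeRight (x y : NodeExpr A) : nle (NodeExpr.conj x y) y :=
  nleCongr (andComm y x) (.refl y) (andLeLeft y x)

theorem andMonoR {x y : NodeExpr A} (z : NodeExpr A) (h : nle x y) :
    nle (NodeExpr.conj z x) (.conj z y) :=
  (distrib z x y).symm.trans (NDer.congr_conj (.refl z) h)

end XPathMinus
namespace XPathMinus
variable {A : Type} [Fintype A]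

/-! ### Path order and composition toolkit -/

def ple (α β : PathExpr A) : Prop := PDer (.union α β) β

theorem pleOfDer {α β : PathExpr A} (h : PDer α β) : ple α β :=
  (PDer.congr_union h (.refl _)).trans (PDer.isAx3 β)

theorem pleRefl (α : PathExpr A) : ple α α := PDer.isAx3 α

theorem pleTrans {α β γ : PathExpr A} (h1 : ple α β) (h2 : ple β γ) : ple α γ :=
  (PDer.congr_union (.refl α) h2.symm).trans <| (PDer.isAx1 _ _ _).symm.trans <|
    (PDer.congr_union h1 (.refl γ)).trans h2

theorem unionBot (α : PathExpr A) : PDer (.union α botP) α :=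
  (PDer.isAx2 _ _).trans (PDer.isAx7 α)

theorem pleBot {α : PathExpr A} (h : ple α botP) : PDer α botP :=
  (unionBot α).symm.trans h

theorem pleUnionLeft (α β : PathExpr A) : ple α (.union α β) :=
  (PDer.isAx1 α α β).symm.trans (PDer.congr_union (PDer.isAx3 α) (.refl β))

theorem pleUnionRight (α β : PathExpr A) : ple β (.union α β) :=
  (PDer.isAx1 β α β).symm.trans ((PDer.congr_union (PDer.isAx2 β α) (.refl β)).trans
    ((PDer.isAx1 α β β).trans (PDer.congr_union (.refl α) (PDer.isAx3 β))))

theorem pleUnion {α β γ : PathExpr A} (h1 : ple α γ) (h2 : ple β γ) :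
    ple (PathExpr.union α β) γ :=
  (PDer.isAx1 α β γ).trans ((PDer.congr_union (.refl α) h2).trans h1)

theorem pleCongr {α α' β β' : PathExpr A} (hα : PDer α α') (hβ : PDer β β')
    (h : ple α β) : ple α' β' :=
  (PDer.congr_union hα.symm hβ.symm).trans (h.trans hβ)

theorem pleCompLeft {α α' : PathExpr A} (γ : PathExpr A) (h : ple α α') :
    ple (PathExpr.comp α γ) (.comp α' γ) :=
  (PDer.isAx6r α α' γ).symm.trans (PDer.congr_comp h (.refl _))

theorem pleCompRight {β β' : PathExpr A} (γ : PathExpr A) (h : ple β β') :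
    ple (PathExpr.comp γ β) (.comp γ β') :=
  (PDer.isAx6l γ β β').symm.trans (PDer.congr_comp (.refl _) h)

theorem testLe {x y : NodeExpr A} (h : nle x y) : ple (PathExpr.test x) (.test y) :=
  (PDer.prAx3 x y).symm.trans (PDer.congr_test h)

theorem prAx1' (β : PathExpr A) : PDer (PathExpr.comp (.test (.neg (.diam β))) β) botP :=
  (PDer.congr_comp (PDer.isAx5l _).symm (.refl _)).trans (PDer.prAx1 .eps β)

theorem testNegComp (x : NodeExpr A) :
    PDer (PathExpr.comp (.test (.neg x)) (.test x)) botP :=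
  (PDer.congr_comp (PDer.congr_test (NDer.congr_neg (NDer.ndAx2 x).symm)) (.refl _)).trans
    (prAx1' (.test x))

theorem testCompNeg (x : NodeExpr A) :
    PDer (PathExpr.comp (.test x) (.test (.neg x))) botP :=
  (PDer.congr_comp (PDer.congr_test (dn x).symm) (.refl _)).trans (testNegComp (.neg x))

theorem compBot (γ : PathExpr A) : PDer (PathExpr.comp γ botP) botP :=
  (PDer.isAx5r _).symm.trans (PDer.prAx1 γ .eps)

theorem testComp (x y : NodeExpr A) :
    PDer (PathExpr.comp (.test x) (.test y)) (.test (.conj x y)) := by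
  have split : PDer (PathExpr.test x) (.union (.test (.conj x y)) (.test (.conj x (.neg y)))) :=
    (PDer.congr_test (hstar x y)).trans (PDer.prAx3 _ _)
  have h1 : PDer (PathExpr.comp (.test (.conj x (.neg y))) (.test y)) botP :=
    pleBot <| pleTrans (pleCompLeft _ (testLe (andLeRight x (.neg y))))
      (pleOfDer (testNegComp y))
  have h2 : PDer (PathExpr.comp (.test (.conj x y)) (.test (.neg y))) botP :=
    pleBot <| pleTrans (pleCompLeft _ (testLe (andLeRight x y)))
      (pleOfDer (testCompNeg y))
  have h3 : PDer (PathExpr.comp (.test (.conj x y)) (.test y)) (.test (.conj x y)) :=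
    (unionBot _).symm.trans <| (PDer.congr_union (.refl _) h2.symm).trans <|
      (PDer.isAx6l _ _ _).symm.trans <|
      (PDer.congr_comp (.refl _) (PDer.prAx3 y (.neg y)).symm).trans <|
      (PDer.congr_comp (.refl _) (PDer.congr_test (em y))).trans <|
      (PDer.congr_comp (.refl _) PDer.prAx2).trans (PDer.isAx5r _)
  exact (PDer.congr_comp split (.refl _)).trans <| (PDer.isAx6r _ _ _).trans <|
    (PDer.congr_union h3 h1).trans (unionBot _)

theorem botComp (γ : PathExpr A) : PDer (PathExpr.comp botP γ) botP := by
  have step1 : PDer (botP : PathExpr A)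
      (.comp (.test botN) (.test (.neg (.diam γ)))) :=
    (PDer.congr_test (botAnd (NodeExpr.neg (.diam γ))).symm).trans (testComp botN _).symm
  exact (PDer.congr_comp step1 (.refl _)).trans <| (PDer.isAx4 _ _ _).symm.trans <|
    (PDer.congr_comp (.refl _) (prAx1' γ)).trans (compBot (.test botN))

theorem diamMono {α β : PathExpr A} (h : ple α β) :
    nle (NodeExpr.diam α) (.diam β) :=
  (NDer.ndAx3 α β).symm.trans (NDer.congr_diam h)

theorem diamBot : NDer (NodeExpr.diam (botP : PathExpr A)) botN := NDer.ndAx2 botN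

theorem diamTestComp (x : NodeExpr A) (γ : PathExpr A) :
    NDer (NodeExpr.diam (.comp (.test x) γ)) (.conj x (.diam γ)) :=
  (NDer.ndAx4 _ _).trans <| (NDer.congr_diam (PDer.congr_comp (.refl _)
      (PDer.congr_test (.refl _)))).trans <|
    (NDer.congr_diam (testComp x (.diam γ))).trans (NDer.ndAx2 _)

theorem diamUnionBot (α : PathExpr A) : NDer (NodeExpr.diam (.union α botP)) (.diam α) :=
  NDer.congr_diam (unionBot α)

theorem eqMonoL {α α' : PathExpr A} (β : PathExpr A) (h : ple α α') :
    nle (NodeExpr.eqTest α β) (.eqTest α' β) :=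
  (NDer.eqAx2 α α' β).symm.trans (NDer.congr_eqTest h (.refl _))

theorem eqMonoR {β β' : PathExpr A} (α : PathExpr A) (h : ple β β') :
    nle (NodeExpr.eqTest α β) (.eqTest α β') :=
  (orCongr (NDer.eqAx1 _ _) (NDer.eqAx1 _ _)).trans ((eqMonoL α h).trans (NDer.eqAx1 _ _))

theorem eqUnionR (α β β' : PathExpr A) :
    NDer (NodeExpr.eqTest α (.union β β')) (nOr (.eqTest α β) (.eqTest α β')) :=
  (NDer.eqAx1 _ _).trans ((NDer.eqAx2 β β' α).trans
    (orCongr (NDer.eqAx1 _ _) (NDer.eqAx1 _ _)))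

end XPathMinus
namespace XPathMinus
variable {A : Type}

mutual
/-- Translation: relabel the current (root) node to `a`. Node part. -/
noncomputable def Fn (a : A) : NodeExpr A → NodeExpr A
  | .lab c => if c = a then topN else botN
  | .neg χ => .neg (Fn a χ)
  | .conj χ ρ => .conj (Fn a χ) (Fn a ρ)
  | .diam α => .diam (.union (.test (Fs a α)) (Fm a α))
  | .eqTest α β => .eqTest (.union (.test (Fs a α)) (Fm a α))
      (.union (.test (Fs a β)) (Fm a β))

/-- Stationary part of a translated path. -/
noncomputable def Fs (a : A) : PathExpr A → NodeExpr A
  | .eps => topN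
  | .down => botN
  | .test χ => Fn a χ
  | .comp α β => .conj (Fs a α) (Fs a β)
  | .union α β => nOr (Fs a α) (Fs a β)

/-- Moving part of a translated path. -/
noncomputable def Fm (a : A) : PathExpr A → PathExpr A
  | .eps => botP
  | .down => .down
  | .test _ => botP
  | .comp α β => .union (.comp (.test (Fs a α)) (Fm a β)) (.comp (Fm a α) β)
  | .union α β => .union (Fm a α) (Fm a β)
end

/-- Full translated path. -/
noncomputable def FP (a : A) (α : PathExpr A) : PathExpr A :=
  .union (.test (Fs a α)) (Fm a α)

variable [Fintype A]

theorem puSwap (α β γ δ : PathExpr A) :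
    PDer (PathExpr.union (.union α β) (.union γ δ)) (.union (.union α γ) (.union β δ)) :=
  (PDer.isAx1 _ _ _).trans <|
    (PDer.congr_union (.refl α) (PDer.isAx1 β γ δ).symm).trans <|
    (PDer.congr_union (.refl α) (PDer.congr_union (PDer.isAx2 β γ) (.refl δ))).trans <|
    (PDer.congr_union (.refl α) (PDer.isAx1 γ β δ)).trans (PDer.isAx1 α γ _).symm

theorem FnTop {a : A} : NDer (Fn a topN) topN := by
  show NDer (NodeExpr.diam (.union (.test (Fs a .eps)) (Fm a .eps))) topN
  simp only [Fs, Fm]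
  exact (diamUnionBot _).trans (NDer.ndAx2 topN)

theorem FnBot {a : A} : NDer (Fn a botN) botN := by
  show NDer (NodeExpr.neg (Fn a topN)) botN
  exact FnTop.congr_neg

theorem diamFP2 (u : NodeExpr A) (v : PathExpr A) :
    NDer (NodeExpr.diam (.union (.test u) v)) (nOr u (.diam v)) :=
  (NDer.ndAx3 _ _).trans (orCongr (NDer.ndAx2 u) (.refl _))

theorem diamFP3 (u : NodeExpr A) (v w : PathExpr A) :
    NDer (NodeExpr.diam (.union (.test u) (.union v w)))
      (nOr u (nOr (.diam v) (.diam w))) :=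
  (NDer.ndAx3 _ _).trans (orCongr (NDer.ndAx2 u) (NDer.ndAx3 v w))

theorem FPunion {a : A} (α β : PathExpr A) :
    PDer (FP a (.union α β)) (.union (FP a α) (FP a β)) := by
  show PDer (PathExpr.union (.test (Fs a (.union α β))) (Fm a (.union α β))) _
  simp only [Fs, Fm]
  exact (PDer.congr_union (PDer.prAx3 _ _) (.refl _)).trans (puSwap _ _ _ _)

theorem FPeps {a : A} : PDer (FP a .eps) (.eps : PathExpr A) := by
  show PDer (PathExpr.union (.test (Fs a .eps)) (Fm a .eps)) _
  simp only [Fs, Fm]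
  exact (unionBot _).trans PDer.prAx2

/-- `x ≤ y → x ∧ y ≡ x`. -/
theorem leAnd {x y : NodeExpr A} (h : nle x y) : NDer (NodeExpr.conj x y) x :=
  (NDer.congr_conj (.refl x) h.symm).trans (absorbAnd x y)

/-- `x ≤ y → x ∧ ¬y ≡ ⊥`. -/
theorem leContra {x y : NodeExpr A} (h : nle x y) :
    NDer (NodeExpr.conj x (.neg y)) botN :=
  (NDer.congr_conj (leAnd h).symm (.refl _)).trans <| (andAssoc _ _ _).trans <|
    (NDer.congr_conj (.refl x) (andNotSelf y)).trans (andBot x)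

/-- negation is antitone. -/
theorem negAntitone {x y : NodeExpr A} (h : nle x y) : nle (NodeExpr.neg y) (.neg x) :=
  (negConj y x).symm.trans <| ((andComm y x).congr_neg).trans ((leAnd h).congr_neg)

theorem sLeDiamFP {a : A} (β : PathExpr A) : nle (Fs a β) (.diam (FP a β)) :=
  nleCongr (NDer.ndAx2 (Fs a β)) (.refl _) (diamMono (pleUnionLeft _ _))

theorem mLeDiamFP {a : A} (β : PathExpr A) : nle (NodeExpr.diam (Fm a β)) (.diam (FP a β)) :=
  diamMono (pleUnionRight _ _)

end XPathMinus
namespace XPathMinus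
variable {A : Type} [Fintype A]

theorem FnOr (a : A) (x y : NodeExpr A) :
    Fn a (nOr x y) = nOr (Fn a x) (Fn a y) := by simp [nOr, Fn]

theorem FnBigOrLab (a : A) (L : List A) (h : a ∈ L) :
    NDer (Fn a (bigOr (L.map .lab))) topN := by
  induction L with
  | nil => simp at h
  | cons c L ih =>
    have e : bigOr ((c :: L).map NodeExpr.lab) = nOr (.lab c) (bigOr (L.map .lab)) := rfl
    rw [e, FnOr]
    by_cases hc : c = a
    · have h1 : Fn a (NodeExpr.lab c) = topN := by simp [Fn, hc]
      rw [h1]; exact topOr _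
    · have h1 : Fn a (NodeExpr.lab c) = botN := by simp [Fn, hc]
      have ha : a ∈ L := by
        rcases List.mem_cons.1 h with h' | h'
        · exact absurd h'.symm hc
        · exact h'
      rw [h1]; exact (botOr _).trans (ih ha)

theorem caseLb1 (a : A) :
    NDer (Fn a topN) (Fn a (bigOr ((Finset.univ : Finset A).toList.map NodeExpr.lab))) :=
  FnTop.trans (FnBigOrLab a _ (by simp)).symm

theorem caseLb2 (a : A) {c d : A} (h : c ≠ d) :
    NDer (Fn a botN) (Fn a (.conj (.lab c) (.lab d))) := by
  have e : Fn a (NodeExpr.conj (.lab c) (.lab d))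
      = .conj (Fn a (.lab c)) (Fn a (.lab d)) := by simp [Fn]
  rw [e]
  by_cases hc : c = a
  · have hd : Fn a (NodeExpr.lab d) = botN := by
      have : d ≠ a := fun hda => h (hc.trans hda.symm)
      simp [Fn, this]
    rw [hd]; exact FnBot.trans (andBot _).symm
  · have hc' : Fn a (NodeExpr.lab c) = botN := by simp [Fn, hc]
    rw [hc']; exact FnBot.trans (botAnd _).symm

theorem caseNd1 (a : A) (φ ψ : NodeExpr A) :
    NDer (Fn a φ)
      (Fn a (nOr (.neg (nOr (.neg φ) ψ)) (.neg (nOr (.neg φ) (.neg ψ))))) := by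
  simp only [nOr, Fn]
  exact NDer.ndAx1 (Fn a φ) (Fn a ψ)

theorem caseNd2 (a : A) (φ : NodeExpr A) :
    NDer (Fn a (.diam (.test φ))) (Fn a φ) := by
  simp only [Fn, Fs, Fm]
  exact (diamUnionBot _).trans (NDer.ndAx2 (Fn a φ))

theorem caseNd3 (a : A) (α β : PathExpr A) :
    NDer (Fn a (.diam (.union α β))) (Fn a (nOr (.diam α) (.diam β))) := by
  rw [FnOr]
  show NDer (NodeExpr.diam (FP a (.union α β))) _
  exact (NDer.congr_diam (FPunion α β)).trans (NDer.ndAx3 (FP a α) (FP a β))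

theorem caseNd4 (a : A) (α β : PathExpr A) :
    NDer (Fn a (.diam (.comp α β))) (Fn a (.diam (.comp α (.test (.diam β))))) := by
  have L : NDer (Fn a (.diam (.comp α β)))
      (nOr (.conj (Fs a α) (Fs a β))
        (nOr (.conj (Fs a α) (.diam (Fm a β))) (.diam (.comp (Fm a α) β)))) := by
    simp only [Fn, Fs, Fm]
    exact (diamFP3 _ _ _).trans (orCongr (.refl _) (orCongr (diamTestComp _ _) (.refl _)))
  have R : NDer (Fn a (.diam (.comp α (.test (.diam β)))))
      (nOr (nOr (.conj (Fs a α) (Fs a β)) (.conj (Fs a α) (.diam (Fm a β))))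
        (.diam (.comp (Fm a α) β))) := by
    simp only [Fn, Fs, Fm]
    exact (diamFP3 _ _ _).trans <| orCongr
      ((NDer.congr_conj (.refl _) (diamFP2 _ _)).trans (distrib _ _ _))
      ((orCongr ((NDer.congr_diam (compBot _)).trans diamBot)
        (NDer.ndAx4 (Fm a α) β).symm).trans (botOr _))
  exact L.trans ((orAssoc _ _ _).symm.trans R.symm)

theorem caseEq1 (a : A) (α β : PathExpr A) :
    NDer (Fn a (.eqTest α β)) (Fn a (.eqTest β α)) := by
  simp only [Fn]
  exact NDer.eqAx1 _ _

theorem caseEq2 (a : A) (α β γ : PathExpr A) :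
    NDer (Fn a (.eqTest (.union α β) γ))
      (Fn a (nOr (.eqTest α γ) (.eqTest β γ))) := by
  rw [FnOr]
  simp only [Fn]
  exact (NDer.congr_eqTest (FPunion α β) (.refl _)).trans (NDer.eqAx2 (FP a α) (FP a β) (FP a γ))

theorem caseEq3 (a : A) (φ : NodeExpr A) (α β : PathExpr A) :
    NDer (Fn a (.conj φ (.eqTest α β)))
      (Fn a (.eqTest (.comp (.test φ) α) β)) := by
  have hpath : PDer (PathExpr.comp (.test (Fn a φ)) (FP a α)) (FP a (.comp (.test φ) α)) := by
    show PDer _ (PathExpr.union (.test (Fs a (.comp (.test φ) α))) (Fm a (.comp (.test φ) α)))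
    simp only [Fs, Fm]
    exact (PDer.isAx6l _ _ _).trans <|
      (PDer.congr_union (testComp (Fn a φ) (Fs a α))
        ((unionBot _).symm.trans (PDer.congr_union (.refl _) (botComp α).symm))).trans
      (.refl _)
  simp only [Fn]
  exact (NDer.eqAx3 (Fn a φ) (FP a α) (FP a β)).trans
    (NDer.congr_eqTest hpath (.refl _))

theorem caseEq4 (a : A) (α β : PathExpr A) :
    NDer (Fn a (nOr (.eqTest α β) (.diam α))) (Fn a (.diam α)) := by
  rw [FnOr]
  simp only [Fn]
  exact NDer.eqAx4 (FP a α) (FP a β)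

theorem caseEq6 (a : A) (α : PathExpr A) :
    NDer (Fn a (.eqTest α α)) (Fn a (.diam α)) := by
  simp only [Fn]
  exact NDer.eqAx6 (FP a α)

theorem caseEq7 (a : A) (α β : PathExpr A) :
    NDer (Fn a (nOr (.conj (.eqTest α .eps) (.eqTest β .eps)) (.eqTest α β)))
      (Fn a (.eqTest α β)) := by
  rw [FnOr]
  simp only [Fn]
  show NDer (nOr (.conj (.eqTest (FP a α) (FP a .eps)) (.eqTest (FP a β) (FP a .eps)))
      (.eqTest (FP a α) (FP a β))) (.eqTest (FP a α) (FP a β))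
  exact (orCongr (NDer.congr_conj (NDer.congr_eqTest (.refl _) FPeps)
      (NDer.congr_eqTest (.refl _) FPeps)) (.refl _)).trans
    (NDer.eqAx7 (FP a α) (FP a β))

theorem caseEq5 (a : A) (γ α β : PathExpr A) :
    NDer (Fn a (nOr (.diam (.comp γ (.test (.eqTest α β))))
        (.eqTest (.comp γ α) (.comp γ β))))
      (Fn a (.eqTest (.comp γ α) (.comp γ β))) := by
  rw [FnOr]
  simp only [Fn]
  -- reduce the left disjunct
  have hX : NDer (Fn a (.diam (.comp γ (.test (.eqTest α β)))))
      (nOr (.conj (Fs a γ) (Fn a (.eqTest α β)))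
        (.diam (.comp (Fm a γ) (.test (.eqTest α β))))) := by
    simp only [Fn, Fs, Fm]
    exact (diamFP3 _ _ _).trans <| orCongr (.refl _) <|
      (orCongr ((NDer.congr_diam (compBot _)).trans diamBot) (.refl _)).trans (botOr _)
  have hmono : ∀ δ : PathExpr A, ple (PathExpr.comp (.test (Fs a γ)) (FP a δ))
      (FP a (.comp γ δ)) := by
    intro δ
    show ple _ (PathExpr.union (.test (Fs a (.comp γ δ))) (Fm a (.comp γ δ)))
    simp only [Fs, Fm]
    refine pleCongr ((PDer.isAx6l _ _ _).trans
      (PDer.congr_union (testComp (Fs a γ) (Fs a δ)) (.refl _))).symm (.refl _) ?_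
    exact pleUnion (pleUnionLeft _ _)
      (pleTrans (pleUnionLeft _ _) (pleUnionRight _ _))
  -- part (ii): stationary component
  have hii : nle (NodeExpr.conj (Fs a γ) (Fn a (.eqTest α β)))
      (.eqTest (FP a (.comp γ α)) (FP a (.comp γ β))) := by
    have h1 : NDer (NodeExpr.conj (Fs a γ) (Fn a (.eqTest α β)))
        (.diam (.comp (.test (Fs a γ)) (.test (.eqTest (FP a α) (FP a β))))) := by
      simp only [Fn]
      exact (NDer.congr_conj (.refl _)
        (NDer.ndAx2 (NodeExpr.eqTest (FP a α) (FP a β))).symm).trans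
        (diamTestComp (Fs a γ) (.test (.eqTest (FP a α) (FP a β)))).symm
    have h2 : nle (NodeExpr.diam
          (.comp (.test (Fs a γ)) (.test (.eqTest (FP a α) (FP a β)))))
        (.eqTest (.comp (.test (Fs a γ)) (FP a α)) (.comp (.test (Fs a γ)) (FP a β))) :=
      NDer.eqAx5 (.test (Fs a γ)) (FP a α) (FP a β)
    have h3 : nle (NodeExpr.eqTest (.comp (.test (Fs a γ)) (FP a α))
          (.comp (.test (Fs a γ)) (FP a β)))
        (.eqTest (FP a (.comp γ α)) (FP a (.comp γ β))) :=
      leTrans (eqMonoL _ (hmono α)) (eqMonoR _ (hmono β))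
    exact nleCongr h1.symm (.refl _) (leTrans h2 h3)
  -- part (i): moving component
  have hi : nle (NodeExpr.diam (.comp (Fm a γ) (.test (.eqTest α β))))
      (.eqTest (FP a (.comp γ α)) (FP a (.comp γ β))) := by
    have h1 : nle (NodeExpr.diam (.comp (Fm a γ) (.test (.eqTest α β))))
        (.eqTest (.comp (Fm a γ) α) (.comp (Fm a γ) β)) := NDer.eqAx5 (Fm a γ) α β
    have hm : ∀ δ : PathExpr A, ple (PathExpr.comp (Fm a γ) δ) (FP a (.comp γ δ)) := by
      intro δ
      show ple _ (PathExpr.union (.test (Fs a (.comp γ δ))) (Fm a (.comp γ δ)))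
      simp only [Fs, Fm]
      exact pleTrans (pleUnionRight _ _) (pleUnionRight _ _)
    exact leTrans h1 (leTrans (eqMonoL _ (hm α)) (eqMonoR _ (hm β)))
  exact (orCongr hX (.refl _)).trans (orLe hii hi)

theorem caseEq8 (a : A) (α β γ : PathExpr A) :
    NDer (Fn a (nOr (.eqTest α (.comp β (.test (.eqTest .eps γ))))
        (.eqTest α (.comp β γ))))
      (Fn a (.eqTest α (.comp β γ))) := by
  rw [FnOr]
  simp only [Fn]
  -- decompose FP a (β[⟨ε=γ⟩])
  have hdec : PDer (FP a (.comp β (.test (.eqTest .eps γ))))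
      (.union (.comp (.test (Fs a β)) (.test (Fn a (.eqTest .eps γ))))
        (.comp (Fm a β) (.test (.eqTest .eps γ)))) := by
    show PDer (PathExpr.union (.test (Fs a (.comp β (.test (.eqTest .eps γ)))))
      (Fm a (.comp β (.test (.eqTest .eps γ))))) _
    simp only [Fs, Fm]
    exact PDer.congr_union (testComp (Fs a β) _).symm
      ((PDer.congr_union (compBot _) (.refl _)).trans (PDer.isAx7 _))
  have hXred : NDer (NodeExpr.eqTest (FP a α) (FP a (.comp β (.test (.eqTest .eps γ)))))
      (nOr (.eqTest (FP a α) (.comp (.test (Fs a β)) (.test (Fn a (.eqTest .eps γ)))))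
        (.eqTest (FP a α) (.comp (Fm a β) (.test (.eqTest .eps γ))))) :=
    (NDer.congr_eqTest (.refl _) hdec).trans (eqUnionR _ _ _)
  have hmono : ∀ δ : PathExpr A, ple (PathExpr.comp (.test (Fs a β)) (FP a δ))
      (FP a (.comp β δ)) := by
    intro δ
    show ple _ (PathExpr.union (.test (Fs a (.comp β δ))) (Fm a (.comp β δ)))
    simp only [Fs, Fm]
    refine pleCongr ((PDer.isAx6l _ _ _).trans
      (PDer.congr_union (testComp (Fs a β) (Fs a δ)) (.refl _))).symm (.refl _) ?_
    exact pleUnion (pleUnionLeft _ _)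
      (pleTrans (pleUnionLeft _ _) (pleUnionRight _ _))
  have hm : ∀ δ : PathExpr A, ple (PathExpr.comp (Fm a β) δ) (FP a (.comp β δ)) := by
    intro δ
    show ple _ (PathExpr.union (.test (Fs a (.comp β δ))) (Fm a (.comp β δ)))
    simp only [Fs, Fm]
    exact pleTrans (pleUnionRight _ _) (pleUnionRight _ _)
  -- (i) stationary part
  have hi : nle (NodeExpr.eqTest (FP a α)
        (.comp (.test (Fs a β)) (.test (Fn a (.eqTest .eps γ)))))
      (.eqTest (FP a α) (FP a (.comp β γ))) := by
    have h0 : NDer (Fn a (.eqTest .eps γ)) (NodeExpr.eqTest .eps (FP a γ)) := by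
      simp only [Fn]
      exact NDer.congr_eqTest FPeps (.refl _)
    have h1 : nle (NodeExpr.eqTest (FP a α)
          (.comp (.test (Fs a β)) (.test (.eqTest .eps (FP a γ)))))
        (.eqTest (FP a α) (.comp (.test (Fs a β)) (FP a γ))) :=
      NDer.eqAx8 (FP a α) (.test (Fs a β)) (FP a γ)
    refine nleCongr (NDer.congr_eqTest (.refl _)
      (PDer.congr_comp (.refl _) (PDer.congr_test h0))).symm (.refl _) ?_
    exact leTrans h1 (eqMonoR _ (hmono γ))
  -- (ii) moving part
  have hii : nle (NodeExpr.eqTest (FP a α) (.comp (Fm a β) (.test (.eqTest .eps γ))))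
      (.eqTest (FP a α) (FP a (.comp β γ))) :=
    leTrans (NDer.eqAx8 (FP a α) (Fm a β) γ) (eqMonoR _ (hm γ))
  exact (orCongr hXred (.refl _)).trans (orLe hi hii)
end XPathMinus
namespace XPathMinus
variable {A : Type} [Fintype A]

theorem casePr1 (a : A) (α β : PathExpr A) :
    NDer (Fs a (.comp (.comp α (.test (.neg (.diam β)))) β)) (Fs a botP) ∧
    PDer (Fm a (.comp (.comp α (.test (.neg (.diam β)))) β)) (Fm a botP) := by
  constructor
  · simp only [Fs, Fn, Fm]
    refine NDer.trans ?_ (FnBot (a := a)).symm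
    exact (andAssoc _ _ _).trans ((NDer.congr_conj (.refl _)
      ((andComm _ _).trans (leContra (sLeDiamFP β)))).trans (andBot _))
  · simp only [Fs, Fm, Fn]
    have part1 : PDer (PathExpr.comp
        (.test (.conj (Fs a α) (.neg (.diam (FP a β))))) (Fm a β)) botP :=
      pleBot (pleTrans (pleCompLeft _ (testLe
        (leTrans (andLeRight _ _) (negAntitone (mLeDiamFP β)))))
        (pleOfDer (prAx1' (Fm a β))))
    have h21 : PDer (PathExpr.comp (.comp (.test (Fs a α)) botP) β) botP :=
      (PDer.congr_comp (compBot _) (.refl _)).trans (botComp β)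
    have h22 : PDer (PathExpr.comp (.comp (Fm a α) (.test (.neg (.diam β)))) β) botP :=
      PDer.prAx1 (Fm a α) β
    have part2 : PDer (PathExpr.comp
        (.union (.comp (.test (Fs a α)) botP) (.comp (Fm a α) (.test (.neg (.diam β))))) β)
        botP :=
      (PDer.isAx6r _ _ _).trans ((PDer.congr_union h21 h22).trans (PDer.isAx3 botP))
    exact (PDer.congr_union part1 part2).trans (PDer.isAx3 botP)

theorem casePr2 (a : A) :
    NDer (Fs a (.test topN)) (Fs a (.eps : PathExpr A)) ∧
    PDer (Fm a (.test topN)) (Fm a (.eps : PathExpr A)) := by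
  refine ⟨?_, ?_⟩ <;> simp only [Fs, Fm]
  · exact FnTop
  · exact .refl _

theorem casePr3 (a : A) (φ ψ : NodeExpr A) :
    NDer (Fs a (.test (nOr φ ψ))) (Fs a (.union (.test φ) (.test ψ))) ∧
    PDer (Fm a (.test (nOr φ ψ))) (Fm a (.union (.test φ) (.test ψ))) := by
  constructor
  · show NDer (Fn a (nOr φ ψ)) (Fs a (.union (.test φ) (.test ψ)))
    rw [FnOr]
    simp only [Fs]
    exact .refl _
  · simp only [Fm]
    exact (PDer.isAx3 _).symm

theorem caseIs1 (a : A) (α β γ : PathExpr A) :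
    NDer (Fs a (.union (.union α β) γ)) (Fs a (.union α (.union β γ))) ∧
    PDer (Fm a (.union (.union α β) γ)) (Fm a (.union α (.union β γ))) := by
  refine ⟨?_, ?_⟩ <;> simp only [Fs, Fm]
  · exact orAssoc _ _ _
  · exact PDer.isAx1 _ _ _

theorem caseIs2 (a : A) (α β : PathExpr A) :
    NDer (Fs a (.union α β)) (Fs a (.union β α)) ∧
    PDer (Fm a (.union α β)) (Fm a (.union β α)) := by
  refine ⟨?_, ?_⟩ <;> simp only [Fs, Fm]
  · exact orComm _ _
  · exact PDer.isAx2 _ _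

theorem caseIs3 (a : A) (α : PathExpr A) :
    NDer (Fs a (.union α α)) (Fs a α) ∧ PDer (Fm a (.union α α)) (Fm a α) := by
  refine ⟨?_, ?_⟩ <;> simp only [Fs, Fm]
  · exact orIdem _
  · exact PDer.isAx3 _

theorem caseIs4 (a : A) (α β γ : PathExpr A) :
    NDer (Fs a (.comp α (.comp β γ))) (Fs a (.comp (.comp α β) γ)) ∧
    PDer (Fm a (.comp α (.comp β γ))) (Fm a (.comp (.comp α β) γ)) := by
  refine ⟨?_, ?_⟩ <;> simp only [Fs, Fm]
  · exact (andAssoc _ _ _).symm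
  · exact PDer.trans
      (PDer.congr_union ((PDer.isAx6l _ _ _).trans (PDer.congr_union
        ((PDer.isAx4 _ _ _).trans (PDer.congr_comp (testComp _ _) (.refl _)))
        (PDer.isAx4 _ _ _))) (PDer.isAx4 _ _ _))
      (PDer.trans (PDer.isAx1 (PathExpr.comp (.test (.conj (Fs a α) (Fs a β))) (Fm a γ))
          (PathExpr.comp (.comp (.test (Fs a α)) (Fm a β)) γ)
          (PathExpr.comp (.comp (Fm a α) β) γ))
        (PDer.congr_union (.refl _) (PDer.isAx6r _ _ _).symm))

theorem caseIs5l (a : A) (α : PathExpr A) :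
    NDer (Fs a (.comp .eps α)) (Fs a α) ∧ PDer (Fm a (.comp .eps α)) (Fm a α) := by
  refine ⟨?_, ?_⟩ <;> simp only [Fs, Fm]
  · exact topAnd _
  · exact (PDer.congr_union (PDer.congr_comp PDer.prAx2 (.refl _)) (botComp α)).trans
      ((PDer.congr_union (PDer.isAx5l _) (.refl _)).trans (unionBot _))

theorem caseIs5r (a : A) (α : PathExpr A) :
    NDer (Fs a (.comp α .eps)) (Fs a α) ∧ PDer (Fm a (.comp α .eps)) (Fm a α) := by
  refine ⟨?_, ?_⟩ <;> simp only [Fs, Fm]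
  · exact andTop _
  · exact (PDer.congr_union (compBot _) (PDer.isAx5r _)).trans (PDer.isAx7 _)

theorem caseIs6l (a : A) (α β γ : PathExpr A) :
    NDer (Fs a (.comp α (.union β γ))) (Fs a (.union (.comp α β) (.comp α γ))) ∧
    PDer (Fm a (.comp α (.union β γ))) (Fm a (.union (.comp α β) (.comp α γ))) := by
  refine ⟨?_, ?_⟩ <;> simp only [Fs, Fm]
  · exact distrib _ _ _
  · exact (PDer.congr_union (PDer.isAx6l _ _ _) (PDer.isAx6l _ _ _)).trans
      (puSwap _ _ _ _)

theorem caseIs6r (a : A) (α β γ : PathExpr A) :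
    NDer (Fs a (.comp (.union α β) γ)) (Fs a (.union (.comp α γ) (.comp β γ))) ∧
    PDer (Fm a (.comp (.union α β) γ)) (Fm a (.union (.comp α γ) (.comp β γ))) := by
  refine ⟨?_, ?_⟩ <;> simp only [Fs, Fm]
  · exact distribR _ _ _
  · exact (PDer.congr_union ((PDer.congr_comp (PDer.prAx3 _ _) (.refl _)).trans
      (PDer.isAx6r _ _ _)) (PDer.isAx6r _ _ _)).trans (puSwap _ _ _ _)

theorem caseIs7 (a : A) (α : PathExpr A) :
    NDer (Fs a (.union botP α)) (Fs a α) ∧ PDer (Fm a (.union botP α)) (Fm a α) := by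
  refine ⟨?_, ?_⟩ <;> simp only [Fs, Fm]
  · exact (orCongr FnBot (.refl _)).trans (botOr _)
  · exact PDer.isAx7 _

/-- Soundness of the root-relabelling translation. -/
theorem FnSound (a : A) {φ ψ : NodeExpr A} (h : NDer φ ψ) : NDer (Fn a φ) (Fn a ψ) :=
  NDer.rec (motive_1 := fun χ ρ _ => NDer (Fn a χ) (Fn a ρ))
    (motive_2 := fun α β _ => NDer (Fs a α) (Fs a β) ∧ PDer (Fm a α) (Fm a β))
    (fun _ => .refl _)
    (fun _ ih => ih.symm)
    (fun _ _ ih1 ih2 => ih1.trans ih2)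
    (fun _ ih => by simp only [Fn]; exact ih.congr_neg)
    (fun _ _ ih1 ih2 => by simp only [Fn]; exact NDer.congr_conj ih1 ih2)
    (fun _ ih => by
      simp only [Fn]
      exact NDer.congr_diam (PDer.congr_union (PDer.congr_test ih.1) ih.2))
    (fun _ _ ih1 ih2 => by
      simp only [Fn]
      exact NDer.congr_eqTest (PDer.congr_union (PDer.congr_test ih1.1) ih1.2)
        (PDer.congr_union (PDer.congr_test ih2.1) ih2.2))
    (caseLb1 a)
    (fun hne => caseLb2 a hne)
    (caseNd1 a)
    (caseNd2 a)
    (caseNd3 a)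
    (caseNd4 a)
    (caseEq1 a)
    (caseEq2 a)
    (caseEq3 a)
    (caseEq4 a)
    (caseEq5 a)
    (caseEq6 a)
    (caseEq7 a)
    (caseEq8 a)
    (fun _ => ⟨.refl _, .refl _⟩)
    (fun _ ih => ⟨ih.1.symm, ih.2.symm⟩)
    (fun _ _ ih1 ih2 => ⟨ih1.1.trans ih2.1, ih1.2.trans ih2.2⟩)
    (fun _ ih => by
      refine ⟨?_, ?_⟩ <;> simp only [Fs, Fm]
      · exact ih
      · exact .refl _)
    (fun _ h2 ih1 ih2 => by
      refine ⟨?_, ?_⟩ <;> simp only [Fs, Fm]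
      · exact NDer.congr_conj ih1.1 ih2.1
      · exact PDer.congr_union (PDer.congr_comp (PDer.congr_test ih1.1) ih2.2)
          (PDer.congr_comp ih1.2 h2))
    (fun _ _ ih1 ih2 => by
      refine ⟨?_, ?_⟩ <;> simp only [Fs, Fm]
      · exact orCongr ih1.1 ih2.1
      · exact PDer.congr_union ih1.2 ih2.2)
    (casePr1 a)
    (casePr2 a)
    (casePr3 a)
    (caseIs1 a)
    (caseIs2 a)
    (caseIs3 a)
    (caseIs4 a)
    (caseIs5l a)
    (caseIs5r a)
    (caseIs6l a)
    (caseIs6r a)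
    (caseIs7 a)
    h

/-- The translation fixes `ε`. -/
theorem FPguardDown (a : A) (δ : PathExpr A) :
    PDer (FP a (.comp .down δ)) (.comp .down δ) := by
  show PDer (PathExpr.union (.test (Fs a (.comp .down δ))) (Fm a (.comp .down δ))) _
  simp only [Fs, Fm]
  exact (PDer.congr_union (PDer.congr_test (botAnd _))
    (PDer.congr_union (botComp _) (.refl _))).trans
    ((PDer.congr_union (.refl _) (PDer.isAx7 _)).trans (PDer.isAx7 _))

/-- Consistency transfer: if `α, β` are fixed by the translation and `a ∧ ⟨α=β⟩`
is inconsistent, then so is `⟨α=β⟩`. -/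
theorem labConjBot {a : A} {α β : PathExpr A}
    (hα : PDer (FP a α) α) (hβ : PDer (FP a β) β)
    (h : NDer (NodeExpr.conj (.lab a) (.eqTest α β)) botN) :
    NDer (NodeExpr.eqTest α β) botN := by
  have h1 := FnSound a h
  have e : Fn a (NodeExpr.conj (.lab a) (.eqTest α β))
      = .conj topN (.eqTest (FP a α) (FP a β)) := by
    simp [Fn, FP]
  have hl : NDer (NodeExpr.eqTest α β) (Fn a (.conj (.lab a) (.eqTest α β))) := by
    rw [e]
    exact ((topAnd _).trans (NDer.congr_eqTest hα hβ)).symm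
  exact (hl.trans h1).trans FnBot

end XPathMinus
namespace XPathMinus
variable {A : Type} [Fintype A]

theorem bigOrAppend (l₁ l₂ : List (NodeExpr A)) :
    NDer (bigOr (l₁ ++ l₂)) (nOr (bigOr l₁) (bigOr l₂)) := by
  induction l₁ with
  | nil => exact (botOr _).symm
  | cons x t ih =>
    show NDer (nOr x (bigOr (t ++ l₂))) _
    exact (orCongr (.refl x) ih).trans (orAssoc x (bigOr t) (bigOr l₂)).symm

/-- Left-nested conjunction of signed literals over `D`, starting from `ρ`. -/
noncomputable def ext (ρ : NodeExpr A) (C D : List (NodeExpr A)) : NodeExpr A :=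
  D.foldl (fun acc d => .conj acc (if d ∈ C then d else .neg d)) ρ

theorem mkNF_eq_ext (a : A) (C D : List (NodeExpr A)) : mkNF a C D = ext (.lab a) C D := rfl

theorem ext_congr_mem
    (D : List (NodeExpr A)) (C₁ C₂ : List (NodeExpr A))
    (h : ∀ e ∈ D, e ∈ C₁ ↔ e ∈ C₂) (ρ : NodeExpr A) : ext ρ C₁ D = ext ρ C₂ D := by
  induction D generalizing ρ with
  | nil => rfl
  | cons d D ih =>
    show ext (.conj ρ _) C₁ D = ext (.conj ρ _) C₂ D
    have hd := h d List.mem_cons_self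
    by_cases hdC : d ∈ C₁
    · rw [if_pos hdC, if_pos (hd.1 hdC)]
      exact ih (fun e he => h e (List.mem_cons_of_mem d he)) _
    · rw [if_neg hdC, if_neg (fun hc => hdC (hd.2 hc))]
      exact ih (fun e he => h e (List.mem_cons_of_mem d he)) _

theorem ext_base_congr {ρ ρ' : NodeExpr A} (C D : List (NodeExpr A))
    (h : NDer ρ ρ') : NDer (ext ρ C D) (ext ρ' C D) := by
  induction D generalizing ρ ρ' with
  | nil => exact h
  | cons d D ih => exact ih (NDer.congr_conj h (.refl _))

theorem ext_pull (ρ τ : NodeExpr A) (C D : List (NodeExpr A)) :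
    NDer (ext (.conj ρ τ) C D) (.conj (ext ρ C D) τ) := by
  induction D generalizing ρ with
  | nil => exact .refl _
  | cons d D ih =>
    show NDer (ext (.conj (.conj ρ τ) _) C D) (.conj (ext (.conj ρ _) C D) τ)
    refine NDer.trans (ext_base_congr C D ?_) (ih (ρ := .conj ρ _))
    exact (andAssoc ρ τ _).trans ((NDer.congr_conj (.refl ρ) (andComm τ _)).trans
      (andAssoc ρ _ τ).symm)

theorem ext_absorb {d : NodeExpr A} (C : List (NodeExpr A)) {D : List (NodeExpr A)}
    (hd : d ∈ D) (ρ : NodeExpr A) :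
    NDer (.conj (ext ρ C D) (if d ∈ C then d else .neg d)) (ext ρ C D) := by
  induction D generalizing ρ with
  | nil => cases hd
  | cons e D ih =>
    rcases List.mem_cons.1 hd with rfl | hdD
    · show NDer (.conj (ext (.conj ρ _) C D) _) (ext (.conj ρ _) C D)
      have hp := ext_pull ρ (if d ∈ C then d else .neg d) C D
      exact (NDer.congr_conj hp (.refl _)).trans <| (andAssoc _ _ _).trans <|
        (NDer.congr_conj (.refl _) (andIdem _)).trans hp.symm
    · exact ih hdD _

theorem bigOrFilter (P : NodeExpr A → Prop) (l : List (NodeExpr A))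
    (h : ∀ χ ∈ l, NDer χ botN ∨ ∃ ψ, NDer χ ψ ∧ P ψ) :
    ∃ l', (∀ ψ ∈ l', P ψ) ∧ NDer (bigOr l) (bigOr l') := by
  induction l with
  | nil => exact ⟨[], by simp, .refl _⟩
  | cons χ t ih =>
    obtain ⟨l', hl', hder⟩ := ih (fun x hx => h x (List.mem_cons_of_mem _ hx))
    rcases h χ List.mem_cons_self with hbot | ⟨ψ, hψ, hPψ⟩
    · exact ⟨l', hl', (orCongr hbot hder).trans (botOr _)⟩
    · refine ⟨ψ :: l', ?_, orCongr hψ hder⟩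
      intro x hx
      rcases List.mem_cons.1 hx with rfl | hx
      · exact hPψ
      · exact hl' x hx

theorem dnfExt : ∀ (D : List (NodeExpr A)), D.Nodup → ∀ ρ : NodeExpr A,
    ∃ l : List (NodeExpr A), NDer ρ (bigOr l) ∧
      ∀ χ ∈ l, ∃ C, C.Sublist D ∧ χ = ext ρ C D := by
  intro D
  induction D with
  | nil =>
    intro _ ρ
    refine ⟨[ρ], (orBot ρ).symm, ?_⟩
    intro χ hχ
    rcases List.mem_cons.1 hχ with rfl | h
    · exact ⟨[], List.Sublist.refl [], rfl⟩
    · cases h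
  | cons d D ih =>
    intro hD ρ
    have hdD : d ∉ D := (List.nodup_cons.1 hD).1
    have hND : D.Nodup := (List.nodup_cons.1 hD).2
    obtain ⟨l₁, h₁, m₁⟩ := ih hND (.conj ρ d)
    obtain ⟨l₂, h₂, m₂⟩ := ih hND (.conj ρ (.neg d))
    refine ⟨l₁ ++ l₂, ?_, ?_⟩
    · exact (hstar ρ d).trans ((orCongr h₁ h₂).trans (bigOrAppend l₁ l₂).symm)
    · intro χ hχ
      rcases List.mem_append.1 hχ with h | h
      · obtain ⟨C, hCD, rfl⟩ := m₁ χ h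
        refine ⟨d :: C, List.Sublist.cons₂ d hCD, ?_⟩
        show ext (.conj ρ d) C D = ext (.conj ρ (if d ∈ d :: C then d else .neg d)) (d :: C) D
        rw [if_pos (List.mem_cons_self : d ∈ d :: C)]
        refine ext_congr_mem D C (d :: C) ?_ _
        intro e he
        have hne : e ≠ d := fun h => hdD (h ▸ he)
        simp [List.mem_cons, hne]
      · obtain ⟨C, hCD, rfl⟩ := m₂ χ h
        refine ⟨C, hCD.cons d, ?_⟩
        show ext (.conj ρ (.neg d)) C D = ext (.conj ρ (if d ∈ C then d else .neg d)) C D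
        rw [if_neg (fun hc => hdD (hCD.subset hc))]

end XPathMinus
namespace XPathMinus
variable {A : Type} [Fintype A]

theorem nodupFlatMap {X Y : Type*} {l : List X} {f : X → List Y}
    (hl : l.Nodup) (hn : ∀ x ∈ l, (f x).Nodup)
    (hdisj : ∀ x ∈ l, ∀ y ∈ l, x ≠ y → ∀ z ∈ f x, z ∉ f y) :
    (l.flatMap f).Nodup := by
  induction l with
  | nil => simp
  | cons x t ih =>
    rw [List.flatMap_cons]
    have hx : x ∉ t := (List.nodup_cons.1 hl).1
    refine (hn x List.mem_cons_self).append
      (ih (List.nodup_cons.1 hl).2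
        (fun y hy => hn y (List.mem_cons_of_mem _ hy))
        (fun y hy y' hy' => hdisj y (List.mem_cons_of_mem _ hy) y'
          (List.mem_cons_of_mem _ hy'))) ?_
    intro z hz hmem
    obtain ⟨y, hy, hzy⟩ := List.mem_flatMap.1 hmem
    exact hdisj x List.mem_cons_self y (List.mem_cons_of_mem _ hy)
      (fun h => hx (h ▸ hy)) z hz hzy

theorem foldlConjInj : ∀ (D : List (NodeExpr A)) (b₁ b₂ : NodeExpr A)
    (g₁ g₂ : NodeExpr A → NodeExpr A),
    D.foldl (fun acc d => .conj acc (g₁ d)) b₁ = D.foldl (fun acc d => .conj acc (g₂ d)) b₂ →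
    b₁ = b₂ ∧ ∀ d ∈ D, g₁ d = g₂ d := by
  intro D
  induction D with
  | nil => intro b₁ b₂ g₁ g₂ h; exact ⟨h, by simp⟩
  | cons d D ih =>
    intro b₁ b₂ g₁ g₂ h
    obtain ⟨hb, hg⟩ := ih _ _ _ _ h
    injection hb with hb1 hb2
    refine ⟨hb1, ?_⟩
    intro e he
    rcases List.mem_cons.1 he with rfl | he
    · exact hb2
    · exact hg e he

theorem negNe : ∀ d : NodeExpr A, NodeExpr.neg d ≠ d
  | .neg d => fun h => negNe d (by injection h)
  | .lab _ => fun h => by cases h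
  | .conj _ _ => fun h => by cases h
  | .diam _ => fun h => by cases h
  | .eqTest _ _ => fun h => by cases h

theorem iteNegEq {d : NodeExpr A} {C₁ C₂ : List (NodeExpr A)}
    (h : (if d ∈ C₁ then d else .neg d) = (if d ∈ C₂ then d else .neg d)) :
    d ∈ C₁ ↔ d ∈ C₂ := by
  by_cases h1 : d ∈ C₁ <;> by_cases h2 : d ∈ C₂
  · exact iff_of_true h1 h2
  · rw [if_pos h1, if_neg h2] at h; exact absurd h.symm (negNe d)
  · rw [if_neg h1, if_pos h2] at h; exact absurd h (negNe d)
  · exact iff_of_false h1 h2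

theorem sublistExt {X : Type*} : ∀ {D : List X}, D.Nodup →
    ∀ {C₁ C₂ : List X}, C₁.Sublist D → C₂.Sublist D →
    (∀ x, x ∈ C₁ ↔ x ∈ C₂) → C₁ = C₂ := by
  intro D
  induction D with
  | nil =>
    intro _ C₁ C₂ h₁ h₂ _
    rw [List.sublist_nil.1 h₁, List.sublist_nil.1 h₂]
  | cons d D ih =>
    intro hD C₁ C₂ h₁ h₂ hm
    have hdD : d ∉ D := (List.nodup_cons.1 hD).1
    have hND : D.Nodup := (List.nodup_cons.1 hD).2
    rcases List.sublist_cons_iff.1 h₁ with h₁' | ⟨r₁, rfl, hr₁⟩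
    · rcases List.sublist_cons_iff.1 h₂ with h₂' | ⟨r₂, rfl, hr₂⟩
      · exact ih hND h₁' h₂' hm
      · exact absurd (h₁'.subset ((hm d).2 List.mem_cons_self)) hdD
    · rcases List.sublist_cons_iff.1 h₂ with h₂' | ⟨r₂, rfl, hr₂⟩
      · exact absurd (h₂'.subset ((hm d).1 List.mem_cons_self)) hdD
      · have : r₁ = r₂ := by
          refine ih hND hr₁ hr₂ ?_
          intro x
          constructor
          · intro hx
            rcases List.mem_cons.1 ((hm x).1 (List.mem_cons_of_mem d hx)) with rfl | h
            · exact absurd (hr₁.subset hx) hdD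
            · exact h
          · intro hx
            rcases List.mem_cons.1 ((hm x).2 (List.mem_cons_of_mem d hx)) with rfl | h
            · exact absurd (hr₂.subset hx) hdD
            · exact h
        rw [this]

/-- Nodup of mkNF candidate lists over a fixed nodup `D`. -/
theorem candsNodup (D : List (NodeExpr A)) (hD : D.Nodup) :
    (D.sublists.flatMap fun C =>
      (Finset.univ : Finset A).toList.map fun a => mkNF a C D).Nodup := by
  refine nodupFlatMap (List.nodup_sublists.2 hD) ?_ ?_
  · intro C _
    refine List.Nodup.map ?_ (Finset.nodup_toList _)
    intro a b h
    have := (foldlConjInj D (.lab a) (.lab b) _ _ h).1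
    injection this
  · intro C₁ hC₁ C₂ hC₂ hne z hz1 hz2
    obtain ⟨a, _, rfl⟩ := List.mem_map.1 hz1
    obtain ⟨b, _, hzb⟩ := List.mem_map.1 hz2
    obtain ⟨_, hg⟩ := foldlConjInj D (.lab b) (.lab a) _ _ hzb
    have hCC : C₂ = C₁ := by
      refine sublistExt hD (List.mem_sublists.1 hC₂) (List.mem_sublists.1 hC₁) ?_
      intro x
      by_cases hxD : x ∈ D
      · exact iteNegEq (hg x hxD)
      · exact iff_of_false (fun h => hxD ((List.mem_sublists.1 hC₂).subset h))
          (fun h => hxD ((List.mem_sublists.1 hC₁).subset h))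
    exact hne hCC.symm

theorem NFnodup : ∀ n : ℕ, (NF A n).1.Nodup ∧ (NF A n).2.Nodup := by
  intro n
  induction n with
  | zero =>
    constructor
    · show ([.eps] : List (PathExpr A)).Nodup
      simp
    · show ((Finset.univ : Finset A).toList.map fun a =>
        NodeExpr.conj (.lab a) (.eqTest .eps .eps)).Nodup
      refine List.Nodup.map ?_ (Finset.nodup_toList _)
      intro a b h
      simp only [NodeExpr.conj.injEq, NodeExpr.lab.injEq] at h
      exact h.1
  | succ n ih =>
    have h1 : (NF A (n+1)).1 = (.eps : PathExpr A) ::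
        ((NF A n).2.flatMap fun ψ => (NF A n).1.map fun β =>
          PathExpr.comp .down (.comp (.test ψ) β)) := by
      rw [NF]
    have hP' : (NF A (n+1)).1.Nodup := by
      rw [h1]
      refine List.nodup_cons.2 ⟨?_, ?_⟩
      · intro hmem
        obtain ⟨ψ, _, hmem2⟩ := List.mem_flatMap.1 hmem
        obtain ⟨β, _, h⟩ := List.mem_map.1 hmem2
        cases h
      · refine nodupFlatMap ih.2 ?_ ?_
        · intro ψ _
          refine List.Nodup.map ?_ ih.1
          intro x y h
          simp only [PathExpr.comp.injEq, PathExpr.test.injEq, true_and] at h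
          exact h
        · intro ψ _ ψ' _ hne z hz1 hz2
          obtain ⟨β, _, rfl⟩ := List.mem_map.1 hz1
          obtain ⟨β', _, h⟩ := List.mem_map.1 hz2
          simp only [PathExpr.comp.injEq, PathExpr.test.injEq, true_and] at h
          exact hne h.1.symm
    have hD : ((NF A (n+1)).1.flatMap fun α => (NF A (n+1)).1.map fun β =>
        NodeExpr.eqTest α β).Nodup := by
      refine nodupFlatMap hP' ?_ ?_
      · intro α _
        refine List.Nodup.map ?_ hP'
        intro x y h
        simp only [NodeExpr.eqTest.injEq, true_and] at h
        exact h
      · intro α _ α' _ hne z hz1 hz2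
        obtain ⟨β, _, rfl⟩ := List.mem_map.1 hz1
        obtain ⟨β', _, h⟩ := List.mem_map.1 hz2
        simp only [NodeExpr.eqTest.injEq] at h
        exact hne h.1.symm
    refine ⟨hP', ?_⟩
    have h2 : (NF A (n+1)).2 = (((NF A (n+1)).1.flatMap fun α => (NF A (n+1)).1.map fun β =>
        NodeExpr.eqTest α β).sublists.flatMap fun C =>
          (Finset.univ : Finset A).toList.map fun a => mkNF a C
            ((NF A (n+1)).1.flatMap fun α => (NF A (n+1)).1.map fun β =>
              NodeExpr.eqTest α β)).filter fun φ => decide (NConsistent φ) := by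
      conv_lhs => rw [NF]
      conv_rhs => rw [h1]
    rw [h2]
    exact List.Nodup.filter _ (candsNodup _ hD)

end XPathMinus
namespace XPathMinus
variable {A : Type} [Fintype A]

theorem NFsucc1 (n : ℕ) : (NF A (n+1)).1 = (.eps : PathExpr A) ::
    ((NF A n).2.flatMap fun ψ => (NF A n).1.map fun β =>
      PathExpr.comp .down (.comp (.test ψ) β)) := by
  rw [NF]

theorem NFsucc2 (n : ℕ) : (NF A (n+1)).2 =
    (((NF A (n+1)).1.flatMap fun α => (NF A (n+1)).1.map fun β =>
        NodeExpr.eqTest α β).sublists.flatMap fun C =>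
      (Finset.univ : Finset A).toList.map fun a => mkNF a C
        ((NF A (n+1)).1.flatMap fun α => (NF A (n+1)).1.map fun β =>
          NodeExpr.eqTest α β)).filter fun φ => decide (NConsistent φ) := by
  have h1 := NFsucc1 (A := A) n
  conv_lhs => rw [NF]
  conv_rhs => rw [h1]

theorem eqTestFlatNodup (L : List (PathExpr A)) (hL : L.Nodup) :
    (L.flatMap fun α => L.map fun β => NodeExpr.eqTest α β).Nodup := by
  refine nodupFlatMap hL ?_ ?_
  · intro α _
    refine List.Nodup.map ?_ hL
    intro x y h
    simp only [NodeExpr.eqTest.injEq, true_and] at h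
    exact h
  · intro α _ α' _ hne z hz1 hz2
    obtain ⟨β, _, rfl⟩ := List.mem_map.1 hz1
    obtain ⟨β', _, h⟩ := List.mem_map.1 hz2
    simp only [NodeExpr.eqTest.injEq] at h
    exact hne h.1.symm

end XPathMinus

/-- For `n > 0` and a label `a`, any `XP⁻`-consistent diamond `φ ∈ D̂ₙ`
satisfies `XP⁻ ⊢ a ∧ φ ≡ ⋁ᵢ ψᵢ` for some normal forms `ψᵢ ∈ N̂ₙ`. -/
theorem XPathMinus.diamond_normal_form {A : Type} [Fintype A] (hA : 1 < Fintype.card A)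
    (n : ℕ) (hn : 0 < n) (a : A) (φ : NodeExpr A)
    (hφ : φ ∈ Dnf A n) (hc : NConsistent φ) :
    ∃ l : List (NodeExpr A), l ≠ [] ∧ (∀ ψ ∈ l, ψ ∈ Nnf A n) ∧
      NDer (NodeExpr.conj (.lab a) φ) (bigOr l) := by
  obtain ⟨α, hα, β, hβ, rfl⟩ := hφ
  obtain ⟨m, rfl⟩ : ∃ m, n = m + 1 := ⟨n - 1, by omega⟩
  have hα1 : α ∈ (NF A (m+1)).1 := hα
  have hβ1 : β ∈ (NF A (m+1)).1 := hβ
  set D : List (NodeExpr A) := (NF A (m+1)).1.flatMap fun α =>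
    (NF A (m+1)).1.map fun β => NodeExpr.eqTest α β with hDdef
  have hDnodup : D.Nodup := eqTestFlatNodup _ (NFnodup (m+1)).1
  have hφD : NodeExpr.eqTest α β ∈ D :=
    List.mem_flatMap.2 ⟨α, hα1, List.mem_map.2 ⟨β, hβ1, rfl⟩⟩
  -- guardedness: the translation fixes normal-form paths
  have hguard : ∀ γ : PathExpr A, γ ∈ (NF A (m+1)).1 → PDer (FP a γ) γ := by
    intro γ hγ
    rw [NFsucc1] at hγ
    rcases List.mem_cons.1 hγ with rfl | hmem
    · exact FPeps
    · obtain ⟨ψ, _, h2⟩ := List.mem_flatMap.1 hmem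
      obtain ⟨δ, _, rfl⟩ := List.mem_map.1 h2
      exact FPguardDown a _
  -- consistency of `a ∧ φ`
  have hconj : ¬ NDer (NodeExpr.conj (.lab a) (.eqTest α β)) botN := fun h =>
    hc (labConjBot (hguard α hα1) (hguard β hβ1) h)
  -- disjunctive normal form over D
  obtain ⟨l, hl, hmem⟩ := dnfExt D hDnodup (NodeExpr.conj (.lab a) (.eqTest α β))
  have hprop : ∀ χ ∈ l, NDer χ botN ∨ ∃ ψ', NDer χ ψ' ∧ ψ' ∈ Nnf A (m+1) := by
    intro χ hχ
    obtain ⟨C, hCD, rfl⟩ := hmem χ hχ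
    have hpull : NDer (ext (NodeExpr.conj (.lab a) (.eqTest α β)) C D)
        (.conj (mkNF a C D) (.eqTest α β)) := by
      rw [mkNF_eq_ext]; exact ext_pull _ _ C D
    by_cases hin : (NodeExpr.eqTest α β) ∈ C
    · have habs : NDer (NodeExpr.conj (mkNF a C D) (.eqTest α β)) (mkNF a C D) := by
        have h := ext_absorb C hφD (NodeExpr.lab a)
        rw [if_pos hin] at h
        rw [mkNF_eq_ext]
        exact h
      by_cases hcons : NConsistent (mkNF a C D)
      · refine Or.inr ⟨mkNF a C D, hpull.trans habs, ?_⟩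
        show mkNF a C D ∈ (NF A (m+1)).2
        rw [NFsucc2]
        refine List.mem_filter.2 ⟨?_, ?_⟩
        · exact List.mem_flatMap.2 ⟨C, List.mem_sublists.2 hCD,
            List.mem_map.2 ⟨a, by simp, rfl⟩⟩
        · exact decide_eq_true hcons
      · exact Or.inl (hpull.trans (habs.trans (Classical.not_not.1 hcons)))
    · have habs : NDer (NodeExpr.conj (mkNF a C D) (.neg (.eqTest α β))) (mkNF a C D) := by
        have h := ext_absorb C hφD (NodeExpr.lab a)
        rw [if_neg hin] at h
        rw [mkNF_eq_ext]
        exact h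
      refine Or.inl (hpull.trans ?_)
      exact (NDer.congr_conj habs.symm (.refl _)).trans <| (andAssoc _ _ _).trans <|
        (NDer.congr_conj (.refl _) (notSelfAnd _)).trans (andBot _)
  obtain ⟨l', hl'mem, hl'der⟩ := bigOrFilter (· ∈ Nnf A (m+1)) l hprop
  refine ⟨l', ?_, hl'mem, hl.trans hl'der⟩
  rintro rfl
  exact hconj (hl.trans hl'der)
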